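/- (Lemma 4.3, high-power case.) Let P > 4 and define g₃ᴿ : ℝ → ℝ by g₃ᴿ(C) = 1/2 + (1/2)·erf(√C − √(P/2)). Set ζ̂₁ = ((√(P/2) − √(P/2 − 2))/2)² and ζ̂₂ = ((√(P/2) + √(P/2 − 2))/2)², so ζ̂₁ < ζ̂₂. Then: (i) g₃ᴿ is concave on [0, ζ̂₁] (ConcaveOn ℝ (Set.Icc 0 ζ̂₁) g₃ᴿ), convex on [ζ̂₁, ζ̂₂] (ConvexOn ℝ (Set.Icc ζ̂₁ ζ̂₂) g₃ᴿ), and concave on [ζ̂₂, ∞) (ConcaveOn ℝ (Set.Ici ζ̂₂) g₃ᴿ); and (ii) there exist τ̂₁ and τ̂₂ with 0 < τ̂₁ ≤ ζ̂₁ and τ̂₂ ≥ ζ̂₂ such that for every C ≥ 0, g₃ᴿ(C) ≤ ((g₃ᴿ(τ̂₂) − g₃ᴿ(τ̂₁))/(τ̂₂ − τ̂₁))·(C − τ̂₁) + g₃ᴿ(τ̂₁); that is, the whole graph of g₃ᴿ over [0, ∞) lies below the straight line through (τ̂₁, g₃ᴿ(τ̂₁)) and (τ̂₂, g₃ᴿ(τ̂₂)).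 -/

import Mathlib

open MeasureTheory ProbabilityTheory Real Set

noncomputable def erf (x : ℝ) : ℝ :=
  (2 / Real.sqrt Real.pi) * ∫ t in (0:ℝ)..x, Real.exp (-t^2)

lemma cont_gauss : Continuous fun t : ℝ => Real.exp (-t^2) := by continuity

lemma erf_hasDerivAt (x : ℝ) : HasDerivAt erf (2 / Real.sqrt π * Real.exp (-x^2)) x := by
  have hc := cont_gauss
  have h := (intervalIntegral.integral_hasDerivAt_right
    (hc.intervalIntegrable 0 x) (hc.stronglyMeasurableAtFilter _ _) hc.continuousAt)
  exact (h.const_mul (2 / Real.sqrt π))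

lemma erf_strictMono : StrictMono erf := by
  apply strictMono_of_deriv_pos
  intro x
  rw [(erf_hasDerivAt x).deriv]
  positivity

lemma erf_continuous : Continuous erf :=
  Differentiable.continuous (fun x => (erf_hasDerivAt x).differentiableAt)

lemma gauss_int_le (x : ℝ) : |∫ t in (0:ℝ)..x, Real.exp (-t^2)| ≤ Real.sqrt π / 2 := by
  have hint : IntegrableOn (fun t : ℝ => Real.exp (-t^2)) (Ioi 0) := by
    simpa using (integrable_exp_neg_mul_sq (b := 1) one_pos).integrableOn
  have key : ∀ y : ℝ, 0 ≤ y → ∫ t in (0:ℝ)..y, Real.exp (-t^2) ≤ Real.sqrt π / 2 := by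
    intro y hy
    rw [intervalIntegral.integral_of_le hy]
    have : ∫ t in Ioc (0:ℝ) y, Real.exp (-t^2) ≤ ∫ t in Ioi (0:ℝ), Real.exp (-t^2) := by
      apply setIntegral_mono_set hint
      · filter_upwards with t using (Real.exp_pos _).le
      · exact HasSubset.Subset.eventuallyLE Ioc_subset_Ioi_self
    calc _ ≤ ∫ t in Ioi (0:ℝ), Real.exp (-t^2) := this
    _ = Real.sqrt π / 2 := by simpa using integral_gaussian_Ioi 1
  have pos : ∀ y : ℝ, 0 ≤ y → 0 ≤ ∫ t in (0:ℝ)..y, Real.exp (-t^2) := by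
    intro y hy
    apply intervalIntegral.integral_nonneg hy
    intro t _; exact (Real.exp_pos _).le
  rcases le_total 0 x with hx | hx
  · rw [abs_of_nonneg (pos x hx)]; exact key x hx
  · have h1 : ∫ t in (0:ℝ)..x, Real.exp (-t^2) = - ∫ t in (0:ℝ)..(-x), Real.exp (-t^2) := by
      rw [intervalIntegral.integral_symm]
      congr 1
      rw [show (0:ℝ) = -(0:ℝ) by ring, ← intervalIntegral.integral_comp_neg
        (fun t => Real.exp (-t^2))]
      simp
    rw [h1, abs_neg, abs_of_nonneg (pos _ (by linarith))]
    exact key _ (by linarith)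

lemma erf_le_one (x : ℝ) : erf x ≤ 1 := by
  have hs : (0:ℝ) < Real.sqrt π := Real.sqrt_pos.2 Real.pi_pos
  have := abs_le.1 (gauss_int_le x)
  rw [erf, div_mul_eq_mul_div, mul_comm]
  rw [div_le_one hs]
  nlinarith [this.2]

lemma neg_one_le_erf (x : ℝ) : -1 ≤ erf x := by
  have hs : (0:ℝ) < Real.sqrt π := Real.sqrt_pos.2 Real.pi_pos
  have := abs_le.1 (gauss_int_le x)
  rw [erf, div_mul_eq_mul_div, mul_comm, le_div_iff₀ hs]
  nlinarith [this.1]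

lemma erf_sub_integral (u y : ℝ) :
    erf y - erf u = (2 / Real.sqrt π) * ∫ t in u..y, Real.exp (-t^2) := by
  rw [erf, erf, ← mul_sub]
  congr 1
  exact intervalIntegral.integral_interval_sub_left
    (cont_gauss.intervalIntegrable 0 y) (cont_gauss.intervalIntegrable 0 u)

noncomputable def psi (a s : ℝ) : ℝ := Real.exp (-(s-a)^2) / (2 * Real.sqrt π * s)

lemma psi_hasDerivAt (a s : ℝ) (hs : s ≠ 0) :
    HasDerivAt (psi a)
      (-(Real.exp (-(s-a)^2) * (2*s^2 - 2*a*s + 1)) / (2 * Real.sqrt π * s^2)) s := by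
  have h1 : HasDerivAt (fun s : ℝ => -(s-a)^2) (-(2*(s-a))) s := by
    have := (((hasDerivAt_id s).sub_const a).pow 2).neg
    exact this.congr_deriv (by simp)
  have h2 : HasDerivAt (fun s : ℝ => Real.exp (-(s-a)^2))
      (Real.exp (-(s-a)^2) * (-(2*(s-a)))) s := h1.exp
  have h3 : HasDerivAt (fun s : ℝ => 2 * Real.sqrt π * s) (2 * Real.sqrt π) s := by
    simpa using (hasDerivAt_id s).const_mul (2 * Real.sqrt π)
  have hv : 2 * Real.sqrt π * s ≠ 0 := by
    have : (0:ℝ) < Real.sqrt π := Real.sqrt_pos.2 Real.pi_pos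
    positivity
  have := h2.div h3 hv
  refine this.congr_deriv ?_
  have hπ : Real.sqrt π ≠ 0 := (Real.sqrt_pos.2 Real.pi_pos).ne'
  field_simp
  ring

lemma psi_deriv_neg (a s : ℝ) (hs : 0 < s) (hq : 0 < 2*s^2 - 2*a*s + 1) :
    deriv (psi a) s < 0 := by
  rw [(psi_hasDerivAt a s hs.ne').deriv]
  have h1 : (0:ℝ) < Real.exp (-(s-a)^2) := Real.exp_pos _
  have h2 : (0:ℝ) < 2 * Real.sqrt π * s ^ 2 := by
    have : (0:ℝ) < Real.sqrt π := Real.sqrt_pos.2 Real.pi_pos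
    positivity
  apply div_neg_of_neg_of_pos _ h2
  nlinarith

lemma psi_deriv_pos (a s : ℝ) (hs : 0 < s) (hq : 2*s^2 - 2*a*s + 1 < 0) :
    0 < deriv (psi a) s := by
  rw [(psi_hasDerivAt a s hs.ne').deriv]
  have h1 : (0:ℝ) < Real.exp (-(s-a)^2) := Real.exp_pos _
  have h2 : (0:ℝ) < 2 * Real.sqrt π * s ^ 2 := by
    have : (0:ℝ) < Real.sqrt π := Real.sqrt_pos.2 Real.pi_pos
    positivity
  apply div_pos _ h2
  nlinarith

lemma psi_contOn (a : ℝ) (D : Set ℝ) (hD : ∀ s ∈ D, s ≠ 0) : ContinuousOn (psi a) D := by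
  apply ContinuousOn.div
  · fun_prop
  · fun_prop
  · intro s hsD
    have : (0:ℝ) < Real.sqrt π := Real.sqrt_pos.2 Real.pi_pos
    have := hD s hsD
    positivity

section roots
variable {a r s₁ s₂ : ℝ} (ha : 0 < a) (ha2 : 2 < a^2)
  (hr : r = Real.sqrt (a^2 - 2))
  (h1 : s₁ = (a - r)/2) (h2 : s₂ = (a + r)/2)

include ha ha2 hr h1 h2

lemma root_facts : 0 < s₁ ∧ s₁ < s₂ ∧ s₁ + s₂ = a ∧ 2 * (s₁ * s₂) = 1 := by
  have hr2 : r^2 = a^2 - 2 := by rw [hr]; exact Real.sq_sqrt (by linarith)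
  have hr0 : 0 < r := by rw [hr]; exact Real.sqrt_pos.2 (by linarith)
  have hra : r < a := by nlinarith
  refine ⟨by rw [h1]; linarith, by rw [h1, h2]; linarith, by rw [h1, h2]; ring, ?_⟩
  rw [h1, h2]; nlinarith

lemma psi_anti1 : StrictAntiOn (psi a) (Ioc 0 s₁) := by
  obtain ⟨hs1, hs12, hsum, hprod⟩ := root_facts ha ha2 hr h1 h2
  apply strictAntiOn_of_deriv_neg (convex_Ioc 0 s₁)
    (psi_contOn a _ (fun s hs => (hs.1).ne'))
  rw [interior_Ioc]
  intro s hs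
  apply psi_deriv_neg a s hs.1
  nlinarith [mul_pos (sub_pos.2 hs.2) (sub_pos.2 (hs.2.trans hs12))]

lemma psi_mono2 : StrictMonoOn (psi a) (Icc s₁ s₂) := by
  obtain ⟨hs1, hs12, hsum, hprod⟩ := root_facts ha ha2 hr h1 h2
  apply strictMonoOn_of_deriv_pos (convex_Icc s₁ s₂)
    (psi_contOn a _ (fun s hs => by have := hs.1; intro h; rw [h] at this; linarith))
  rw [interior_Icc]
  intro s hs
  apply psi_deriv_pos a s (hs1.trans hs.1)
  nlinarith [mul_pos (sub_pos.2 hs.1) (sub_pos.2 hs.2)]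

lemma psi_anti3 : StrictAntiOn (psi a) (Ici s₂) := by
  obtain ⟨hs1, hs12, hsum, hprod⟩ := root_facts ha ha2 hr h1 h2
  apply strictAntiOn_of_deriv_neg (convex_Ici s₂)
    (psi_contOn a _ (fun s hs => by have : s₂ ≤ s := hs; intro h; rw [h] at this; linarith))
  rw [interior_Ici]
  intro s hs
  have hs2 : s₂ < s := hs
  apply psi_deriv_neg a s (by linarith)
  nlinarith [mul_pos (sub_pos.2 hs2) (sub_pos.2 (hs12.trans hs2))]

end roots

lemma g_hasDerivAt (a : ℝ) (C : ℝ) (hC : 0 < C) :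
    HasDerivAt (fun C => 1/2 + 1/2 * erf (Real.sqrt C - a)) (psi a (Real.sqrt C)) C := by
  have hsC : (0:ℝ) < Real.sqrt C := Real.sqrt_pos.2 hC
  have h1 : HasDerivAt (fun C : ℝ => Real.sqrt C - a) (1/(2*Real.sqrt C)) C :=
    (Real.hasDerivAt_sqrt hC.ne').sub_const a
  have h2 := (erf_hasDerivAt (Real.sqrt C - a)).comp C h1
  have h3 := (h2.const_mul (1/2 : ℝ)).const_add (1/2 : ℝ)
  refine h3.congr_deriv ?_
  have hπ : Real.sqrt π ≠ 0 := (Real.sqrt_pos.2 Real.pi_pos).ne'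
  rw [psi]
  field_simp

set_option maxHeartbeats 1000000 in
theorem stmt_19 (P : ℝ) (hP : 4 < P)
    (g₃R : ℝ → ℝ)
    (hg₃R : ∀ C, g₃R C = 1/2 + (1/2) * erf (Real.sqrt C - Real.sqrt (P/2)))
    (ζhat₁ ζhat₂ : ℝ)
    (hζhat₁ : ζhat₁ = ((Real.sqrt (P/2) - Real.sqrt (P/2 - 2)) / 2)^2)
    (hζhat₂ : ζhat₂ = ((Real.sqrt (P/2) + Real.sqrt (P/2 - 2)) / 2)^2) :
    ζhat₁ < ζhat₂ ∧
    (ConcaveOn ℝ (Set.Icc 0 ζhat₁) g₃R ∧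
      ConvexOn ℝ (Set.Icc ζhat₁ ζhat₂) g₃R ∧
      ConcaveOn ℝ (Set.Ici ζhat₂) g₃R) ∧
    ∃ τhat₁ τhat₂ : ℝ, 0 < τhat₁ ∧ τhat₁ ≤ ζhat₁ ∧ ζhat₂ ≤ τhat₂ ∧
      ∀ C : ℝ, 0 ≤ C →
        g₃R C ≤ ((g₃R τhat₂ - g₃R τhat₁) / (τhat₂ - τhat₁)) * (C - τhat₁) + g₃R τhat₁ := by
  have hgf : g₃R = fun C => 1/2 + 1/2 * erf (Real.sqrt C - Real.sqrt (P/2)) := funext hg₃R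
  subst hgf
  set a := Real.sqrt (P/2) with ha_def
  have ha : 0 < a := Real.sqrt_pos.2 (by linarith)
  have ha2' : a^2 = P/2 := Real.sq_sqrt (by linarith)
  have ha2 : 2 < a^2 := by rw [ha2']; linarith
  set r := Real.sqrt (a^2 - 2) with hr_def
  have hr : r = Real.sqrt (a^2 - 2) := rfl
  have hrP : r = Real.sqrt (P/2 - 2) := by rw [hr_def, ha2']
  set s₁ := (a - r)/2 with hs₁_def
  set s₂ := (a + r)/2 with hs₂_def
  obtain ⟨hs1, hs12, hsum, hprod⟩ := root_facts ha ha2 hr hs₁_def hs₂_def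
  have hζ₁ : ζhat₁ = s₁^2 := by rw [hζhat₁, ← hrP]
  have hζ₂ : ζhat₂ = s₂^2 := by rw [hζhat₂, ← hrP]
  have hζ₁pos : 0 < ζhat₁ := by rw [hζ₁]; positivity
  have hζlt : ζhat₁ < ζhat₂ := by rw [hζ₁, hζ₂]; nlinarith
  have hsqζ₁ : Real.sqrt ζhat₁ = s₁ := by rw [hζ₁]; exact Real.sqrt_sq hs1.le
  have hsqζ₂ : Real.sqrt ζhat₂ = s₂ := by rw [hζ₂]; exact Real.sqrt_sq (by linarith)
  have herf2 : Continuous fun C : ℝ => erf (Real.sqrt C - a) :=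
    erf_continuous.comp ((Real.continuous_sqrt).sub continuous_const)
  have hgc : Continuous fun C => 1/2 + 1/2 * erf (Real.sqrt C - a) :=
    continuous_const.add (continuous_const.mul herf2)
  -- derivative rewrite helper
  have hderiv : ∀ C : ℝ, 0 < C →
      deriv (fun C => 1/2 + 1/2 * erf (Real.sqrt C - a)) C = psi a (Real.sqrt C) :=
    fun C hC => (g_hasDerivAt a C hC).deriv
  -- part (i)
  have hconc1 : ConcaveOn ℝ (Set.Icc 0 ζhat₁) (fun C => 1/2 + 1/2 * erf (Real.sqrt C - a)) := by
    apply AntitoneOn.concaveOn_of_deriv (convex_Icc _ _) hgc.continuousOn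
    · intro C hC
      rw [interior_Icc] at hC
      exact ((g_hasDerivAt a C hC.1).differentiableAt).differentiableWithinAt
    · rw [interior_Icc]
      intro x hx y hy hxy
      rw [hderiv x hx.1, hderiv y hy.1]
      have hmx : Real.sqrt x ∈ Ioc 0 s₁ := by
        constructor
        · exact Real.sqrt_pos.2 hx.1
        · rw [← hsqζ₁]; exact Real.sqrt_le_sqrt hx.2.le
      have hmy : Real.sqrt y ∈ Ioc 0 s₁ := by
        constructor
        · exact Real.sqrt_pos.2 hy.1
        · rw [← hsqζ₁]; exact Real.sqrt_le_sqrt hy.2.le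
      exact (psi_anti1 ha ha2 hr hs₁_def hs₂_def).antitoneOn hmx hmy
        (Real.sqrt_le_sqrt hxy)
  have hconv2 : ConvexOn ℝ (Set.Icc ζhat₁ ζhat₂) (fun C => 1/2 + 1/2 * erf (Real.sqrt C - a)) := by
    apply MonotoneOn.convexOn_of_deriv (convex_Icc _ _) hgc.continuousOn
    · intro C hC
      rw [interior_Icc] at hC
      exact ((g_hasDerivAt a C (hζ₁pos.trans hC.1)).differentiableAt).differentiableWithinAt
    · rw [interior_Icc]
      intro x hx y hy hxy
      rw [hderiv x (hζ₁pos.trans hx.1), hderiv y (hζ₁pos.trans hy.1)]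
      have hmx : Real.sqrt x ∈ Icc s₁ s₂ := by
        constructor
        · rw [← hsqζ₁]; exact Real.sqrt_le_sqrt hx.1.le
        · rw [← hsqζ₂]; exact Real.sqrt_le_sqrt hx.2.le
      have hmy : Real.sqrt y ∈ Icc s₁ s₂ := by
        constructor
        · rw [← hsqζ₁]; exact Real.sqrt_le_sqrt hy.1.le
        · rw [← hsqζ₂]; exact Real.sqrt_le_sqrt hy.2.le
      exact (psi_mono2 ha ha2 hr hs₁_def hs₂_def).monotoneOn hmx hmy (Real.sqrt_le_sqrt hxy)
  have hconc3 : ConcaveOn ℝ (Set.Ici ζhat₂) (fun C => 1/2 + 1/2 * erf (Real.sqrt C - a)) := by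
    have hζ₂pos : 0 < ζhat₂ := hζ₁pos.trans hζlt
    apply AntitoneOn.concaveOn_of_deriv (convex_Ici _) hgc.continuousOn
    · intro C hC
      rw [interior_Ici] at hC
      exact ((g_hasDerivAt a C (hζ₂pos.trans hC)).differentiableAt).differentiableWithinAt
    · rw [interior_Ici]
      intro x hx y hy hxy
      have hx' : ζhat₂ < x := hx
      have hy' : ζhat₂ < y := hy
      rw [hderiv x (hζ₂pos.trans hx'), hderiv y (hζ₂pos.trans hy')]
      have hmx : Real.sqrt x ∈ Ici s₂ := by
        rw [mem_Ici, ← hsqζ₂]; exact Real.sqrt_le_sqrt hx'.le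
      have hmy : Real.sqrt y ∈ Ici s₂ := by
        rw [mem_Ici, ← hsqζ₂]; exact Real.sqrt_le_sqrt hy'.le
      exact (psi_anti3 ha ha2 hr hs₁_def hs₂_def).antitoneOn hmx hmy (Real.sqrt_le_sqrt hxy)
  refine ⟨hζlt, ⟨hconc1, hconv2, hconc3⟩, ?_⟩
  -- part (ii)
  set G : ℝ → ℝ := fun C => 1/2 + 1/2 * erf (Real.sqrt C - a) with hG_def
  clear_value a r s₁ s₂ G
  clear hderiv herf2 hg₃R hr hrP ha_def hr_def hζhat₁ hζhat₂ hP ha2' ha2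
  have hζ₂pos : 0 < ζhat₂ := hζ₁pos.trans hζlt
  have hGmono : ∀ x y : ℝ, x ≤ y → G x ≤ G y := by
    intro x y hxy
    have := erf_strictMono.monotone (sub_le_sub_right (Real.sqrt_le_sqrt hxy) a)
    simp only [hG_def]
    linarith
  have hG0 : ∀ C, 0 ≤ G C := fun C => by
    have := neg_one_le_erf (Real.sqrt C - a); simp only [hG_def]; linarith
  have hG1 : ∀ C, G C ≤ 1 := fun C => by
    have := erf_le_one (Real.sqrt C - a); simp only [hG_def]; linarith
  have hGζ : G ζhat₁ < G ζhat₂ := by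
    have : erf (Real.sqrt ζhat₁ - a) < erf (Real.sqrt ζhat₂ - a) := by
      apply erf_strictMono; rw [hsqζ₁, hsqζ₂]; simp only [sub_lt_sub_iff_right]; exact hs12
    simp only [hG_def]; linarith
  set m₁ := (G ζhat₂ - G ζhat₁) / (2 * ζhat₂) with hm₁_def
  clear_value m₁
  have hm₁pos : 0 < m₁ := by rw [hm₁_def]; exact div_pos (by linarith) (by linarith)
  set m₂ := m₁ + 2 / ζhat₂ with hm₂_def
  clear_value m₂
  have hm₁₂ : m₁ < m₂ := by
    have : 0 < 2 / ζhat₂ := by positivity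
    linarith
  have hm₂pos : 0 < m₂ := hm₁pos.trans hm₁₂
  set T := ζhat₂ + 2 / m₁ with hT_def
  clear_value T
  have hζ₂T : ζhat₂ ≤ T := by
    have : 0 < 2 / m₁ := by positivity
    linarith
  set F : ℝ → ℝ → ℝ := fun m x => G x - m * x with hF_def
  clear_value F
  have hFc : ∀ m : ℝ, Continuous (F m) := fun m => by
    simp only [hF_def]
    exact hgc.sub (continuous_const.mul continuous_id)
  have hmax : ∀ (p q : ℝ), p ≤ q → ∀ m : ℝ,
      ∃ x ∈ Icc p q, sSup (F m '' Icc p q) = F m x ∧ ∀ y ∈ Icc p q, F m y ≤ F m x := by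
    intro p q hpq m
    obtain ⟨x, hx, hmaxx⟩ := isCompact_Icc.exists_isMaxOn (nonempty_Icc.2 hpq)
      (hFc m).continuousOn
    rw [isMaxOn_iff] at hmaxx
    refine ⟨x, hx, le_antisymm (csSup_le ((nonempty_Icc.2 hpq).image _) ?_)
      (le_csSup ⟨F m x, ?_⟩ (mem_image_of_mem _ hx)), hmaxx⟩
    · rintro _ ⟨y, hy, rfl⟩; exact hmaxx y hy
    · rintro _ ⟨y, hy, rfl⟩; exact hmaxx y hy
  set c : ℝ → ℝ := fun m => sSup (F m '' Icc 0 ζhat₁) with hc_def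
  set d : ℝ → ℝ := fun m => sSup (F m '' Icc ζhat₂ T) with hd_def
  clear_value c d
  have hcub : ∀ m : ℝ, ∀ y ∈ Icc (0:ℝ) ζhat₁, F m y ≤ c m := by
    intro m y hy
    obtain ⟨x, hx, he, hb⟩ := hmax 0 ζhat₁ hζ₁pos.le m
    simp only [hc_def]
    calc F m y ≤ F m x := hb y hy
    _ = sSup (F m '' Icc 0 ζhat₁) := he.symm
  have hdub : ∀ m : ℝ, ∀ y ∈ Icc ζhat₂ T, F m y ≤ d m := by
    intro m y hy
    obtain ⟨x, hx, he, hb⟩ := hmax ζhat₂ T hζ₂T m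
    simp only [hd_def]
    calc F m y ≤ F m x := hb y hy
    _ = sSup (F m '' Icc ζhat₂ T) := he.symm
  have hlips : ∀ p q : ℝ, 0 ≤ p → p ≤ q →
      Continuous (fun m => sSup (F m '' Icc p q)) := by
    intro p q hp hpq
    have key : ∀ m m' : ℝ, sSup (F m '' Icc p q) - sSup (F m' '' Icc p q) ≤ q * |m - m'| := by
      intro m m'
      obtain ⟨x, hx, he, hb⟩ := hmax p q hpq m
      obtain ⟨x', hx', he', hb'⟩ := hmax p q hpq m'
      rw [he, he']
      have h1 : F m' x ≤ F m' x' := hb' x hx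
      have h2 : F m x - F m' x = (m' - m) * x := by simp only [hF_def]; ring
      have h3 : (m' - m) * x ≤ |m - m'| * q := by
        have habs : (m' - m) ≤ |m - m'| := by rw [abs_sub_comm]; exact le_abs_self _
        have hx0 : 0 ≤ x := hp.trans hx.1
        have hxq : x ≤ q := hx.2
        nlinarith [abs_nonneg (m - m')]
      nlinarith
    apply LipschitzWith.continuous (K := Real.toNNReal q)
    apply LipschitzWith.of_dist_le_mul
    intro m m'
    rw [Real.dist_eq, Real.dist_eq, Real.coe_toNNReal q (hp.trans hpq), abs_sub_le_iff]
    constructor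
    · calc _ ≤ q * |m - m'| := key m m'
      _ = q * |m - m'| := rfl
    · have := key m' m
      rwa [abs_sub_comm m' m] at this
  have hccont : Continuous c := by
    rw [hc_def]; exact hlips 0 ζhat₁ le_rfl hζ₁pos.le
  have hdcont : Continuous d := by
    rw [hd_def]; exact hlips ζhat₂ T hζ₂pos.le hζ₂T
  have hΔ : Continuous (fun m => c m - d m) := hccont.sub hdcont
  -- sign at m₁
  have hΔm₁ : c m₁ - d m₁ < 0 := by
    have h1 : c m₁ ≤ G ζhat₁ := by
      obtain ⟨x, hx, he, hb⟩ := hmax 0 ζhat₁ hζ₁pos.le m₁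
      have h2 : F m₁ x ≤ G ζhat₁ := by
        have h3 := hGmono x ζhat₁ hx.2
        have h4 : 0 ≤ m₁ * x := mul_nonneg hm₁pos.le hx.1
        simp only [hF_def]; linarith
      simp only [hc_def]; rw [he]; exact h2
    have h2 : F m₁ ζhat₂ ≤ d m₁ := hdub m₁ ζhat₂ ⟨le_rfl, hζ₂T⟩
    have hmζ : m₁ * ζhat₂ = (G ζhat₂ - G ζhat₁) / 2 := by
      rw [hm₁_def]; field_simp
    simp only [hF_def] at h2
    linarith
  -- sign at m₂
  have hΔm₂ : 0 < c m₂ - d m₂ := by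
    have h1 : G 0 ≤ c m₂ := by
      have := hcub m₂ 0 ⟨le_rfl, hζ₁pos.le⟩
      simp only [hF_def, mul_zero, sub_zero] at this
      exact this
    have h2 : d m₂ ≤ 1 - m₂ * ζhat₂ := by
      obtain ⟨x, hx, he, hb⟩ := hmax ζhat₂ T hζ₂T m₂
      have h3 := hG1 x
      have h4 : m₂ * ζhat₂ ≤ m₂ * x := mul_le_mul_of_nonneg_left hx.1 hm₂pos.le
      simp only [hd_def]; rw [he]
      simp only [hF_def]; linarith
    have h3 : m₂ * ζhat₂ = m₁ * ζhat₂ + 2 := by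
      rw [hm₂_def]; field_simp
    have h4 : 0 < m₁ * ζhat₂ := mul_pos hm₁pos hζ₂pos
    linarith [hG0 0]
  -- IVT
  obtain ⟨m, hmIcc, hm0⟩ := intermediate_value_Icc hm₁₂.le hΔ.continuousOn
    (mem_Icc.2 ⟨hΔm₁.le, hΔm₂.le⟩)
  obtain ⟨τ₁, hτ₁mem, hce, hcb⟩ := hmax 0 ζhat₁ hζ₁pos.le m
  obtain ⟨τ₂, hτ₂mem, hde, hdb⟩ := hmax ζhat₂ T hζ₂T m
  have hcm : c m = G τ₁ - m * τ₁ := by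
    simp only [hc_def]; rw [hce]; simp only [hF_def]
  have hdm : d m = G τ₂ - m * τ₂ := by
    simp only [hd_def]; rw [hde]; simp only [hF_def]
  have hccdd : c m = d m := by
    have : c m - d m = 0 := hm0
    linarith
  have hmle : m ≤ m₂ := hmIcc.2
  have hm₁le : m₁ ≤ m := hmIcc.1
  -- τ₁ is positive
  set b := Real.exp (-a^2) / (Real.sqrt π * m₂) with hb_def
  clear_value b
  have hπpos : (0:ℝ) < Real.sqrt π := Real.sqrt_pos.2 Real.pi_pos
  have hbpos : 0 < b := by
    rw [hb_def]; positivity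
  set x₀ := min ζhat₁ (b^2/4) with hx₀_def
  clear_value x₀
  have hx₀pos : 0 < x₀ := by rw [hx₀_def]; exact lt_min hζ₁pos (by positivity)
  have hx₀ζ : x₀ ≤ ζhat₁ := by rw [hx₀_def]; exact min_le_left _ _
  have hsx₀b : Real.sqrt x₀ ≤ b/2 := by
    have h1 : x₀ ≤ b^2/4 := by rw [hx₀_def]; exact min_le_right _ _
    have := Real.sqrt_le_sqrt h1
    rwa [show b^2/4 = (b/2)^2 by ring, Real.sqrt_sq (by positivity)] at this
  have hsx₀a : Real.sqrt x₀ ≤ a := by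
    have h1 : Real.sqrt x₀ ≤ Real.sqrt ζhat₁ := Real.sqrt_le_sqrt hx₀ζ
    rw [hsqζ₁] at h1
    have h2 : s₁ < a := by linarith only [hs12, hsum, hs1]
    linarith only [h1, h2]
  have hint2 : G x₀ - G 0 = (1/Real.sqrt π) * ∫ t in (-a)..(Real.sqrt x₀ - a), Real.exp (-t^2) := by
    have h := erf_sub_integral (0 - a) (Real.sqrt x₀ - a)
    simp only [zero_sub] at h
    simp only [hG_def, Real.sqrt_zero]
    rw [zero_sub]
    linear_combination h / 2
  have hlow : Real.sqrt x₀ * Real.exp (-a^2) ≤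
      ∫ t in (-a)..(Real.sqrt x₀ - a), Real.exp (-t^2) := by
    have hle : -a ≤ Real.sqrt x₀ - a := by
      have := Real.sqrt_nonneg x₀; linarith
    have hcmp : ∀ t ∈ Icc (-a) (Real.sqrt x₀ - a), Real.exp (-a^2) ≤ Real.exp (-t^2) := by
      intro t ht
      apply Real.exp_le_exp.2
      have h1 := ht.1
      have h2 : t ≤ a := by have := ht.2; linarith only [ht.2, hsx₀a, ha]
      have h3 : 0 ≤ (a - t) * (a + t) :=
        mul_nonneg (by linarith only [h2]) (by linarith only [h1])
      have h4 : a^2 - t^2 = (a - t) * (a + t) := by ring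
      linarith only [h3, h4]
    have := intervalIntegral.integral_mono_on hle
      (intervalIntegrable_const :
        IntervalIntegrable (fun _ => Real.exp (-a^2)) volume (-a) (Real.sqrt x₀ - a))
      (cont_gauss.intervalIntegrable _ _) hcmp
    rw [intervalIntegral.integral_const] at this
    have heq : (Real.sqrt x₀ - a - (-a)) • Real.exp (-a^2) = Real.sqrt x₀ * Real.exp (-a^2) := by
      rw [smul_eq_mul]; ring
    rw [heq] at this
    exact this
  have hkey : F m 0 < F m x₀ := by
    have hsq : Real.sqrt x₀ * Real.sqrt x₀ = x₀ := Real.mul_self_sqrt hx₀pos.le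
    have hsx₀pos : 0 < Real.sqrt x₀ := Real.sqrt_pos.2 hx₀pos
    have h2 : m₂ * x₀ < (1/Real.sqrt π) * (Real.sqrt x₀ * Real.exp (-a^2)) := by
      have hb2 : m₂ * (b/2) = Real.exp (-a^2) / (2*Real.sqrt π) := by
        rw [hb_def]; field_simp
      have hepos : (0:ℝ) < Real.exp (-a^2) := Real.exp_pos _
      have step1 : m₂ * x₀ ≤ m₂ * Real.sqrt x₀ * (b/2) := by
        calc m₂ * x₀ = m₂ * Real.sqrt x₀ * Real.sqrt x₀ := by rw [mul_assoc, hsq]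
        _ ≤ m₂ * Real.sqrt x₀ * (b/2) := by
            apply mul_le_mul_of_nonneg_left hsx₀b (by positivity)
      have step2 : m₂ * Real.sqrt x₀ * (b/2) = Real.sqrt x₀ * (Real.exp (-a^2)/(2*Real.sqrt π)) := by
        rw [show m₂ * Real.sqrt x₀ * (b/2) = Real.sqrt x₀ * (m₂ * (b/2)) by ring, hb2]
      have step3 : Real.sqrt x₀ * (Real.exp (-a^2)/(2*Real.sqrt π)) <
          (1/Real.sqrt π) * (Real.sqrt x₀ * Real.exp (-a^2)) := by
        rw [show (1/Real.sqrt π) * (Real.sqrt x₀ * Real.exp (-a^2))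
              = Real.sqrt x₀ * (Real.exp (-a^2) / Real.sqrt π) by field_simp]
        apply mul_lt_mul_of_pos_left _ hsx₀pos
        exact div_lt_div_of_pos_left hepos hπpos (by linarith)
      linarith [step1, step2, step3]
    have h5 : (1/Real.sqrt π) * (Real.sqrt x₀ * Real.exp (-a^2)) ≤ G x₀ - G 0 := by
      rw [hint2]
      exact mul_le_mul_of_nonneg_left hlow (by positivity)
    have h1 : m * x₀ ≤ m₂ * x₀ := mul_le_mul_of_nonneg_right hmle hx₀pos.le
    simp only [hF_def, mul_zero, sub_zero]
    linarith
  have hτ₁pos : 0 < τ₁ := by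
    rcases hτ₁mem.1.lt_or_eq with h | h
    · exact h
    · exfalso
      have hcon := hcb x₀ ⟨hx₀pos.le, hx₀ζ⟩
      rw [← h] at hcon
      linarith
  have hτord : τ₁ < τ₂ := lt_of_le_of_lt hτ₁mem.2 (hζlt.trans_le hτ₂mem.1)
  have hgτ₁ : G τ₁ - m * τ₁ = c m := hcm.symm
  have hgτ₂ : G τ₂ - m * τ₂ = c m := by rw [hccdd, hdm]
  refine ⟨τ₁, τ₂, hτ₁pos, hτ₁mem.2, hτ₂mem.1, ?_⟩
  intro C hC
  have hne : τ₂ - τ₁ ≠ 0 := by linarith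
  have hslope : (G τ₂ - G τ₁) / (τ₂ - τ₁) = m := by
    rw [div_eq_iff hne]
    linarith [hgτ₁, hgτ₂]
  rw [hslope]
  have hrhs : m * (C - τ₁) + G τ₁ = m * C + c m := by linear_combination hgτ₁
  rw [hrhs]
  -- main chord inequality, by cases on the location of C
  rcases le_or_gt C ζhat₁ with h | h
  · have := hcub m C ⟨hC, h⟩
    simp only [hF_def] at this
    linarith
  rcases le_or_gt C ζhat₂ with h2 | h2
  · -- middle region: convexity
    have hζne : ζhat₂ - ζhat₁ ≠ 0 := by linarith
    set lam := (ζhat₂ - C)/(ζhat₂ - ζhat₁) with hlam_def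
    set mu := (C - ζhat₁)/(ζhat₂ - ζhat₁) with hmu_def
    clear_value lam mu
    have hlam : 0 ≤ lam := by
      rw [hlam_def]; exact div_nonneg (by linarith) (by linarith)
    have hmu : 0 ≤ mu := by
      rw [hmu_def]; exact div_nonneg (by linarith) (by linarith)
    have hsum : lam + mu = 1 := by rw [hlam_def, hmu_def]; field_simp; ring
    have hcomb := hconv2.2 (mem_Icc.2 ⟨le_rfl, hζlt.le⟩) (mem_Icc.2 ⟨hζlt.le, le_rfl⟩)
      hlam hmu hsum
    have hpt : lam * ζhat₁ + mu * ζhat₂ = C := by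
      rw [hlam_def, hmu_def]; field_simp; ring
    simp only [smul_eq_mul] at hcomb
    rw [hpt] at hcomb
    have e1 := hcub m ζhat₁ ⟨hζ₁pos.le, le_rfl⟩
    simp only [hF_def] at e1
    have e2 := hdub m ζhat₂ ⟨le_rfl, hζ₂T⟩
    simp only [hF_def] at e2
    rw [← hccdd] at e2
    calc G C ≤ lam * G ζhat₁ + mu * G ζhat₂ := hcomb
    _ ≤ lam * (m * ζhat₁ + c m) + mu * (m * ζhat₂ + c m) :=
        add_le_add (mul_le_mul_of_nonneg_left (by linarith) hlam)
          (mul_le_mul_of_nonneg_left (by linarith) hmu)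
    _ = m * (lam * ζhat₁ + mu * ζhat₂) + (lam + mu) * c m := by ring
    _ = m * C + c m := by rw [hpt, hsum]; ring
  rcases le_or_gt C T with h3 | h3
  · have := hdub m C ⟨h2.le, h3⟩
    simp only [hF_def] at this
    rw [← hccdd] at this
    linarith
  · -- tail region
    have e2 := hdub m ζhat₂ ⟨le_rfl, hζ₂T⟩
    simp only [hF_def] at e2
    rw [← hccdd] at e2
    have h4 : m₁ * (C - ζhat₂) ≤ m * (C - ζhat₂) :=
      mul_le_mul_of_nonneg_right hm₁le (by linarith)
    have h5 : 2 < m₁ * (C - ζhat₂) := by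
      have h6 : 2/m₁ < C - ζhat₂ := by
        rw [hT_def] at h3; linarith
      calc (2:ℝ) = m₁ * (2/m₁) := by field_simp
      _ < m₁ * (C - ζhat₂) := by
          exact mul_lt_mul_of_pos_left h6 hm₁pos
    have h6 := hG1 C
    have h7 := hG0 ζhat₂
    have hms : m * (C - ζhat₂) = m * C - m * ζhat₂ := by ring
    linarith
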